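/- Let A ∈ ℝ_max^{n×n} be irreducible with eigenvalue λ, and assume A^{⊗(k+σ)} = (σλ) ⊗ A^{⊗k} for all k ≥ k⋆. Then for any initial condition x(0) ∈ ℝ^n, the cycletime limit lim_{k→∞} x_i(k)/k exists and equals λ for every coordinate i. -/

import Mathlib

open Finset

/-- Max-plus matrix product over ℝ_max = ℝ ∪ {-∞} (`WithBot ℝ`). -/
def mpMul {n : ℕ} (A B : Matrix (Fin n) (Fin n) (WithBot ℝ)) :
    Matrix (Fin n) (Fin n) (WithBot ℝ) :=
  fun i j => univ.sup fun k => A i k + B k j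

/-- Max-plus matrix powers, with `A^{⊗0} = E`. -/
def mpPow {n : ℕ} (A : Matrix (Fin n) (Fin n) (WithBot ℝ)) : ℕ → Matrix (Fin n) (Fin n) (WithBot ℝ)
  | 0 => fun i j => if i = j then 0 else ⊥
  | k + 1 => mpMul A (mpPow A k)

/-- Max-plus matrix–vector product. -/
def mpMulVec {n : ℕ} (A : Matrix (Fin n) (Fin n) (WithBot ℝ)) (v : Fin n → WithBot ℝ) :
    Fin n → WithBot ℝ :=
  fun i => univ.sup fun k => A i k + v k

/-- Max-plus eigenvector. -/
def IsMpEigenvector {n : ℕ} (A : Matrix (Fin n) (Fin n) (WithBot ℝ))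
    (l : WithBot ℝ) (v : Fin n → WithBot ℝ) : Prop :=
  (∃ i, v i ≠ ⊥) ∧ mpMulVec A v = fun i => l + v i

/-- Max-plus eigenvalue. -/
def IsMpEigenvalue {n : ℕ} (A : Matrix (Fin n) (Fin n) (WithBot ℝ)) (l : WithBot ℝ) : Prop :=
  ∃ v, IsMpEigenvector A l v

/-- A matrix is irreducible if its digraph (arc j → i whenever `A i j ≠ -∞`)
is strongly connected. -/
def MpIrreducible {n : ℕ} (A : Matrix (Fin n) (Fin n) (WithBot ℝ)) : Prop :=
  ∀ i j : Fin n, Relation.ReflTransGen (fun a b => A b a ≠ ⊥) i j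

section Aux
variable {n : ℕ}

lemma mp_add_sup [Nonempty (Fin n)] (c : WithBot ℝ) (f : Fin n → WithBot ℝ) :
    c + univ.sup f = univ.sup fun k => c + f k := by
  apply le_antisymm
  · obtain ⟨k0, _, hk0⟩ := Finset.exists_mem_eq_sup univ univ_nonempty f
    rw [hk0]
    exact Finset.le_sup (f := fun k => c + f k) (Finset.mem_univ k0)
  · exact Finset.sup_le fun k _ => add_le_add_right (Finset.le_sup (Finset.mem_univ k)) c

lemma mp_sup_add [Nonempty (Fin n)] (c : WithBot ℝ) (f : Fin n → WithBot ℝ) :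
    univ.sup f + c = univ.sup fun k => f k + c := by
  rw [add_comm, mp_add_sup]
  simp [add_comm]

lemma mpMulVec_mpMul (A B : Matrix (Fin n) (Fin n) (WithBot ℝ)) (x : Fin n → WithBot ℝ)
    (i : Fin n) : mpMulVec (mpMul A B) x i = mpMulVec A (mpMulVec B x) i := by
  have : Nonempty (Fin n) := ⟨i⟩
  simp only [mpMulVec, mpMul]
  calc (univ.sup fun k => (univ.sup fun m => A i m + B m k) + x k)
      = univ.sup fun k => univ.sup fun m => A i m + B m k + x k := by
        refine Finset.sup_congr rfl fun k _ => ?_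
        rw [mp_sup_add]
    _ = univ.sup fun m => univ.sup fun k => A i m + B m k + x k := Finset.sup_comm _ _ _
    _ = univ.sup fun m => A i m + univ.sup fun k => B m k + x k := by
        refine Finset.sup_congr rfl fun m _ => ?_
        rw [mp_add_sup]
        simp [add_assoc]

lemma mpMulVec_const (M : Matrix (Fin n) (Fin n) (WithBot ℝ)) (c : WithBot ℝ)
    (x : Fin n → WithBot ℝ) (i : Fin n) :
    mpMulVec M (fun j => c + x j) i = c + mpMulVec M x i := by
  have : Nonempty (Fin n) := ⟨i⟩
  simp only [mpMulVec]
  rw [mp_add_sup]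
  refine Finset.sup_congr rfl fun k _ => ?_
  rw [← add_assoc, ← add_assoc, add_comm (M i k) c]

lemma mpMulVec_mono (M : Matrix (Fin n) (Fin n) (WithBot ℝ)) {x y : Fin n → WithBot ℝ}
    (h : ∀ j, x j ≤ y j) (i : Fin n) : mpMulVec M x i ≤ mpMulVec M y i :=
  Finset.sup_mono_fun fun k _ => add_le_add_right (h k) _

lemma mpMulVec_pow_zero (A : Matrix (Fin n) (Fin n) (WithBot ℝ)) (x : Fin n → WithBot ℝ)
    (i : Fin n) : mpMulVec (mpPow A 0) x i = x i := by
  simp only [mpMulVec, mpPow]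
  apply le_antisymm
  · refine Finset.sup_le fun k _ => ?_
    by_cases h : i = k
    · subst h; simp
    · simp [h]
  · have := Finset.le_sup (f := fun k => (if i = k then (0 : WithBot ℝ) else ⊥) + x k)
      (Finset.mem_univ i)
    simpa using this

lemma mpMulVec_eig (A : Matrix (Fin n) (Fin n) (WithBot ℝ)) (l : ℝ) (v : Fin n → WithBot ℝ)
    (hv : mpMulVec A v = fun i => (l : WithBot ℝ) + v i) (k : ℕ) (i : Fin n) :
    mpMulVec (mpPow A k) v i = ((k * l : ℝ) : WithBot ℝ) + v i := by
  induction k generalizing i with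
  | zero => simp [mpMulVec_pow_zero]
  | succ k ih =>
    rw [show mpPow A (k+1) = mpMul A (mpPow A k) from rfl, mpMulVec_mpMul]
    have h1 : mpMulVec (mpPow A k) v = fun j => ((k * l : ℝ) : WithBot ℝ) + v j :=
      funext fun j => ih j
    rw [h1, mpMulVec_const, hv, ← add_assoc, ← WithBot.coe_add]
    congr 2
    push_cast
    ring

lemma mp_div_tendsto (c w l : ℝ) :
    Filter.Tendsto (fun k : ℕ => (c + (k * l + w)) / k) Filter.atTop (nhds l) := by
  have h1 : Filter.Tendsto (fun k : ℕ => (c + w) / k + l) Filter.atTop (nhds l) := by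
    have := (tendsto_const_div_atTop_nhds_zero_nat (c + w)).add
      (tendsto_const_nhds (x := l) (f := Filter.atTop (α := ℕ)))
    simpa using this
  refine h1.congr' ?_
  filter_upwards [Filter.eventually_ge_atTop 1] with k hk
  have hk0 : (k : ℝ) ≠ 0 := Nat.cast_ne_zero.mpr (by omega)
  field_simp
  ring

end Aux

/-- For an irreducible matrix `A` with (finite) eigenvalue λ satisfying the
asymptotic power identity, the cycletime limit `lim_{k→∞} x_i(k)/k` exists and
equals λ for every coordinate i and every finite initial condition. -/
theorem mp_cycletime_eq_eigenvalue {n : ℕ}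
    (A : Matrix (Fin n) (Fin n) (WithBot ℝ)) (l : ℝ) (σ kstar : ℕ)
    (hirr : MpIrreducible A) (heig : IsMpEigenvalue A (l : WithBot ℝ))
    (hpow : ∀ k, kstar ≤ k →
      mpPow A (k + σ) = fun i j => σ • (l : WithBot ℝ) + mpPow A k i j) :
    ∀ x0 : Fin n → ℝ, ∀ i : Fin n,
      Filter.Tendsto
        (fun k : ℕ => WithBot.unbotD 0 (mpMulVec (mpPow A k) (fun j => (x0 j : WithBot ℝ)) i) / k)
        Filter.atTop (nhds l) := by
  obtain ⟨v, ⟨i0, hi0⟩, hv⟩ := heig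
  have key : ∀ a b, Relation.ReflTransGen (fun a b => A b a ≠ ⊥) a b → v a ≠ ⊥ → v b ≠ ⊥ := by
    intro a b h
    induction h with
    | refl => exact id
    | @tail b c _ hbc ih =>
      intro hva
      have hvb := ih hva
      intro hvc
      have h1 : A c b + v b ≤ (l : WithBot ℝ) + v c := by
        have hc := congrFun hv c
        rw [← hc]
        exact Finset.le_sup (f := fun k => A c k + v k) (Finset.mem_univ b)
      rw [hvc, WithBot.add_bot, le_bot_iff] at h1
      rcases WithBot.add_eq_bot.mp h1 with h | h
      exacts [hbc h, hvb h]
  have hfin : ∀ i, v i ≠ ⊥ := fun i => key i0 i (hirr i0 i) hi0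
  set w : Fin n → ℝ := fun i => (v i).unbot (hfin i) with hw
  have hvw : ∀ i, v i = ((w i : ℝ) : WithBot ℝ) := fun i => (WithBot.coe_unbot (v i) (hfin i)).symm
  intro x0 i
  have hne : Nonempty (Fin n) := ⟨i⟩
  set c1 : ℝ := univ.inf' univ_nonempty (fun j => x0 j - w j) with hc1
  set c2 : ℝ := univ.sup' univ_nonempty (fun j => x0 j - w j) with hc2
  have hbound : ∀ k : ℕ,
      ((c1 + (k * l + w i) : ℝ) : WithBot ℝ) ≤ mpMulVec (mpPow A k) (fun j => (x0 j : WithBot ℝ)) i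
      ∧ mpMulVec (mpPow A k) (fun j => (x0 j : WithBot ℝ)) i ≤ ((c2 + (k * l + w i) : ℝ) : WithBot ℝ) := by
    intro k
    have hlo : ∀ j, ((c1 : ℝ) : WithBot ℝ) + v j ≤ ((x0 j : ℝ) : WithBot ℝ) := by
      intro j
      rw [hvw j, ← WithBot.coe_add]
      refine WithBot.coe_le_coe.mpr ?_
      have := Finset.inf'_le (fun j => x0 j - w j) (Finset.mem_univ j)
      rw [← hc1] at this
      linarith
    have hhi : ∀ j, ((x0 j : ℝ) : WithBot ℝ) ≤ ((c2 : ℝ) : WithBot ℝ) + v j := by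
      intro j
      rw [hvw j, ← WithBot.coe_add]
      refine WithBot.coe_le_coe.mpr ?_
      have := Finset.le_sup' (fun j => x0 j - w j) (Finset.mem_univ j)
      rw [← hc2] at this
      linarith
    constructor
    · calc ((c1 + (k * l + w i) : ℝ) : WithBot ℝ)
          = (c1 : ℝ) + (((k * l : ℝ) : WithBot ℝ) + v i) := by
            rw [hvw i]; push_cast; rfl
        _ = (c1 : ℝ) + mpMulVec (mpPow A k) v i := by rw [mpMulVec_eig A l v hv k i]
        _ = mpMulVec (mpPow A k) (fun j => ((c1 : ℝ) : WithBot ℝ) + v j) i :=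
            (mpMulVec_const _ _ _ _).symm
        _ ≤ _ := mpMulVec_mono _ hlo i
    · calc mpMulVec (mpPow A k) (fun j => (x0 j : WithBot ℝ)) i
          ≤ mpMulVec (mpPow A k) (fun j => ((c2 : ℝ) : WithBot ℝ) + v j) i :=
            mpMulVec_mono _ hhi i
        _ = (c2 : ℝ) + mpMulVec (mpPow A k) v i := mpMulVec_const _ _ _ _
        _ = ((c2 + (k * l + w i) : ℝ) : WithBot ℝ) := by
            rw [mpMulVec_eig A l v hv k i, hvw i]; push_cast; rfl
  have hr : ∀ k : ℕ,
      c1 + (k * l + w i) ≤ WithBot.unbotD 0 (mpMulVec (mpPow A k) (fun j => (x0 j : WithBot ℝ)) i)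
      ∧ WithBot.unbotD 0 (mpMulVec (mpPow A k) (fun j => (x0 j : WithBot ℝ)) i) ≤ c2 + (k * l + w i) := by
    intro k
    obtain ⟨h1, h2⟩ := hbound k
    rcases hx : mpMulVec (mpPow A k) (fun j => (x0 j : WithBot ℝ)) i with _ | r
    · rw [hx] at h1; exact absurd h1 (not_le.mpr (WithBot.bot_lt_coe _))
    · rw [hx] at h1 h2
      exact ⟨WithBot.coe_le_coe.mp h1, WithBot.coe_le_coe.mp h2⟩
  refine Filter.Tendsto.congr (fun k => rfl) ?_
  refine tendsto_of_tendsto_of_tendsto_of_le_of_le'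
    (mp_div_tendsto c1 (w i) l) (mp_div_tendsto c2 (w i) l) ?_ ?_
  · filter_upwards [Filter.eventually_ge_atTop 1] with k hk
    have hkpos : (0 : ℝ) < k := by positivity
    gcongr
    exact (hr k).1
  · filter_upwards [Filter.eventually_ge_atTop 1] with k hk
    have hkpos : (0 : ℝ) < k := by positivity
    gcongr
    exact (hr k).2
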